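/- Let f be an entire function of exponential type with |D^n f(0)| ≤ C·K^n for all n, and let A = {x ∈ ℂ : e·K·|x|·exp(K|x|) ≤ 1}. Then for every x ∈ A and every integer m ≥ 1: (1/m!)·D^m f(0) = Σ_{p=m}^{∞} C(p-1, m-1) · ((-1)^{p-m} p^{p-m} / p!) · x^{p-m} · D^p f(px). -/

import Mathlib

open Polynomial Finset
open scoped Nat

open scoped Nat

lemma my_iter_iter (f : ℂ → ℂ) (p q : ℕ) :
    iteratedDeriv q (iteratedDeriv p f) = iteratedDeriv (p + q) f := by
  induction q with
  | zero => simp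
  | succ q ih => rw [iteratedDeriv_succ, ih, ← Nat.add_assoc, ← iteratedDeriv_succ]

lemma my_entire_iter {f : ℂ → ℂ} (hf : Differentiable ℂ f) (p : ℕ) :
    Differentiable ℂ (iteratedDeriv p f) :=
  (hf.contDiff (n := ⊤)).differentiable_iteratedDeriv p
    (by exact lt_top_iff_ne_top.mpr (by simp))

lemma my_taylor {f : ℂ → ℂ} (hf : Differentiable ℂ f) (p : ℕ) (z : ℂ) :
    HasSum (fun q : ℕ => ((q ! : ℕ) : ℂ)⁻¹ * z ^ q * iteratedDeriv (p + q) f 0)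
      (iteratedDeriv p f z) := by
  have h := Complex.hasSum_taylorSeries_of_entire (my_entire_iter hf p) 0 z
  simp only [my_iter_iter, sub_zero, smul_eq_mul] at h
  simpa only [mul_assoc] using h



lemma my_findiff (k : ℕ) : ∀ (P : Polynomial ℂ), P.degree < k →
    ∑ j ∈ Finset.range (k + 1), (-1 : ℂ) ^ j * (k.choose j) * P.eval (j : ℂ) = 0 := by
  induction k with
  | zero =>
    intro P hP
    have hP0 : P = 0 := by
      by_contra h
      rw [Polynomial.degree_eq_natDegree h] at hP
      exact absurd hP (by simp)
    simp [hP0]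
  | succ k ih =>
    intro P hP
    have hQdeg : (P - P.comp (X + 1)).degree < k := by
      rcases eq_or_ne P 0 with rfl | hP0
      · rw [show ((0:Polynomial ℂ) - (0:Polynomial ℂ).comp (X + 1)) = 0 by simp,
          Polynomial.degree_zero, Nat.cast_withBot]
        exact WithBot.bot_lt_coe k
      rcases le_or_gt P.degree 0 with hd0 | hd0
      · have hc := Polynomial.degree_le_zero_iff.mp hd0
        rw [show P - P.comp (X + 1) = 0 by rw [hc]; simp, Polynomial.degree_zero,
          Nat.cast_withBot]
        exact WithBot.bot_lt_coe k
      · have hndX : (X + 1 : Polynomial ℂ).natDegree = 1 := by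
          rw [← Polynomial.C_1, Polynomial.natDegree_X_add_C]
        have hlcX : (X + 1 : Polynomial ℂ).leadingCoeff = 1 := by
          rw [← Polynomial.C_1]
          exact (Polynomial.monic_X_add_C 1).leadingCoeff
        have hlc : (P.comp (X + 1)).leadingCoeff = P.leadingCoeff := by
          rw [Polynomial.leadingCoeff_comp (by rw [hndX]; norm_num), hlcX, one_pow, mul_one]
        have hcomp0 : P.comp (X + 1) ≠ 0 := by
          intro h
          apply hP0
          rw [← Polynomial.leadingCoeff_eq_zero, ← hlc, h, Polynomial.leadingCoeff_zero]
        have hdeg_comp : (P.comp (X + 1)).degree = P.degree := by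
          rw [Polynomial.degree_eq_natDegree hcomp0, Polynomial.degree_eq_natDegree hP0,
            Polynomial.natDegree_comp, hndX, mul_one]
        have h1 : (P - P.comp (X + 1)).degree < P.degree :=
          Polynomial.degree_sub_lt hdeg_comp.symm hP0 hlc.symm
        have h2 : P.degree ≤ k := by
          rw [Polynomial.degree_eq_natDegree hP0] at hP ⊢
          exact_mod_cast Nat.lt_succ_iff.mp (by exact_mod_cast hP)
        exact lt_of_lt_of_le h1 h2
    have key : ∑ j ∈ Finset.range (k + 1 + 1), (-1 : ℂ) ^ j * ((k+1).choose j) * P.eval (j : ℂ)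
        = ∑ j ∈ Finset.range (k + 1), (-1 : ℂ) ^ j * (k.choose j)
            * (P - P.comp (X + 1)).eval (j : ℂ) := by
      have e1 : ∀ j : ℕ, (P - P.comp (X + 1)).eval (j : ℂ)
          = P.eval (j : ℂ) - P.eval ((j : ℂ) + 1) := by
        intro j; simp [Polynomial.eval_comp]
      simp only [e1, mul_sub, Finset.sum_sub_distrib]
      rw [Finset.sum_range_succ' (fun j => (-1 : ℂ) ^ j * ((k+1).choose j) * P.eval (j : ℂ)) (k+1)]
      have expand : ∀ i ∈ Finset.range (k + 1),
          (-1 : ℂ) ^ (i+1) * (((k+1).choose (i+1) : ℕ) : ℂ) * P.eval (((i+1 : ℕ) : ℂ))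
          = -((-1 : ℂ) ^ i * (k.choose i) * P.eval ((i:ℂ) + 1))
            + (-1 : ℂ) ^ (i+1) * (k.choose (i+1)) * P.eval ((i:ℂ)+1) := by
        intro i _
        rw [Nat.choose_succ_succ]
        push_cast
        ring
      rw [Finset.sum_congr rfl expand, Finset.sum_add_distrib]
      have hT2 : ∑ i ∈ Finset.range (k+1),
          (-1 : ℂ) ^ (i+1) * ((k.choose (i+1) : ℕ) : ℂ) * P.eval ((i:ℂ)+1)
          = ∑ j ∈ Finset.range (k+1), (-1 : ℂ) ^ j * (k.choose j) * P.eval (j : ℂ)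
            - P.eval 0 := by
        rw [Finset.sum_range_succ]
        rw [Finset.sum_range_succ' (fun j => (-1 : ℂ) ^ j * ((k.choose j : ℕ) : ℂ) * P.eval (j : ℂ)) k]
        simp [Nat.choose_succ_self]
      rw [Finset.sum_neg_distrib, hT2]
      simp only [pow_zero, Nat.choose_zero_right, Nat.cast_one, Nat.cast_zero, one_mul]
      ring
    rw [key]
    exact ih _ hQdeg




lemma my_combo (m n : ℕ) (hm : 1 ≤ m) (hn : 1 ≤ n) :
    ∑ j ∈ Finset.range (n + 1), (-1 : ℂ) ^ j * (((m + j - 1).choose (m - 1) : ℕ) : ℂ)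
      * ((m + j : ℕ) : ℂ) ^ n / ((((m + j)! : ℕ) : ℂ) * (((n - j)! : ℕ) : ℂ)) = 0 := by
  obtain ⟨m', rfl⟩ : ∃ m', m = m' + 1 := ⟨m - 1, (Nat.succ_pred_eq_of_pos hm).symm⟩
  obtain ⟨n', rfl⟩ : ∃ n', n = n' + 1 := ⟨n - 1, (Nat.succ_pred_eq_of_pos hn).symm⟩
  have hP : ((X + C ((m' : ℂ) + 1)) ^ n' : Polynomial ℂ).degree < (n' + 1 : ℕ) := by
    rw [Polynomial.degree_pow, Polynomial.degree_X_add_C]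
    simp only [nsmul_eq_mul, mul_one]
    exact_mod_cast Nat.lt_succ_self n'
  have h0 := my_findiff (n' + 1) _ hP
  have key : ∀ j ∈ Finset.range (n' + 2),
      (-1 : ℂ) ^ j * (((m' + 1 + j - 1).choose (m' + 1 - 1) : ℕ) : ℂ)
        * ((m' + 1 + j : ℕ) : ℂ) ^ (n' + 1)
        / ((((m' + 1 + j)! : ℕ) : ℂ) * (((n' + 1 - j)! : ℕ) : ℂ))
      = ((m' ! : ℂ) * ((n' + 1)! : ℂ))⁻¹
        * ((-1 : ℂ) ^ j * (((n' + 1).choose j : ℕ) : ℂ)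
          * ((X + C ((m' : ℂ) + 1)) ^ n' : Polynomial ℂ).eval (j : ℂ)) := by
    intro j hj
    have hj' : j ≤ n' + 1 := Nat.lt_succ_iff.mp (Finset.mem_range.mp hj)
    have e1 : (m' + 1 + j - 1).choose (m' + 1 - 1) = (m' + j).choose m' := by
      congr 1 <;> omega
    have e2 : (m' + 1 + j)! = (m' + j).choose m' * m' ! * j ! * (m' + 1 + j) := by
      have h := Nat.choose_mul_factorial_mul_factorial (Nat.le_add_right m' j)
      rw [show m' + j - m' = j by omega] at h
      rw [show m' + 1 + j = (m' + j) + 1 by omega, Nat.factorial_succ, h]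
      ring
    have e3 : (n' + 1)! = (n' + 1).choose j * j ! * (n' + 1 - j)! :=
      (Nat.choose_mul_factorial_mul_factorial hj').symm
    have heval : ((X + C ((m' : ℂ) + 1)) ^ n' : Polynomial ℂ).eval (j : ℂ)
        = ((m' + 1 + j : ℕ) : ℂ) ^ n' := by
      simp only [Polynomial.eval_pow, Polynomial.eval_add, Polynomial.eval_X, Polynomial.eval_C]
      push_cast; ring_nf
    rw [e1, e2, heval]
    have hc1 : (((m' + j).choose m' : ℕ) : ℂ) ≠ 0 := by
      exact_mod_cast (Nat.choose_pos (Nat.le_add_right m' j)).ne'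
    have hc2 : ((m' ! : ℕ) : ℂ) ≠ 0 := by exact_mod_cast (Nat.factorial_pos m').ne'
    have hc3 : ((j ! : ℕ) : ℂ) ≠ 0 := by exact_mod_cast (Nat.factorial_pos j).ne'
    have hc4 : (((n' + 1 - j)! : ℕ) : ℂ) ≠ 0 := by
      exact_mod_cast (Nat.factorial_pos (n' + 1 - j)).ne'
    have hc5 : ((m' + 1 + j : ℕ) : ℂ) ≠ 0 := by
      exact_mod_cast (by omega : m' + 1 + j ≠ 0)
    have hc6 : (((n' + 1).choose j : ℕ) : ℂ) ≠ 0 := by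
      exact_mod_cast (Nat.choose_pos hj').ne'
    rw [e3]
    simp only [Nat.cast_mul]
    rw [pow_succ]
    generalize hY : ((m' + 1 + j : ℕ) : ℂ) = Y at hc5 ⊢
    rw [inv_mul_eq_div, div_eq_div_iff
      (mul_ne_zero (mul_ne_zero (mul_ne_zero (mul_ne_zero hc1 hc2) hc3) hc5) hc4)
      (mul_ne_zero hc2 (mul_ne_zero (mul_ne_zero hc6 hc3) hc4))]
    ring
  rw [Finset.sum_congr rfl key, ← Finset.mul_sum]
  rw [show n' + 2 = (n' + 1) + 1 from rfl] at *
  rw [h0, mul_zero]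




lemma my_stirling : ∃ a : ℝ, 0 < a ∧ ∀ i : ℕ, 1 ≤ i →
    a * (Real.sqrt (2 * i) * ((i : ℝ) / Real.exp 1) ^ i) ≤ (i ! : ℝ) := by
  obtain ⟨a, ha0, ha⟩ := Stirling.stirlingSeq'_bounded_by_pos_constant
  refine ⟨a, ha0, fun i hi => ?_⟩
  obtain ⟨n, rfl⟩ : ∃ n, i = n + 1 := ⟨i - 1, by omega⟩
  have h := ha n
  rw [Stirling.stirlingSeq, le_div_iff₀] at h
  · exact_mod_cast h
  · positivity

set_option maxHeartbeats 2000000 in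
lemma my_summable (m : ℕ) (hm : 1 ≤ m) (r : ℝ) (hr0 : 0 ≤ r)
    (ht : r * Real.exp r ≤ (Real.exp 1)⁻¹) :
    Summable (fun j : ℕ => (((m + j - 1).choose (m - 1) : ℕ) : ℝ) * ((m + j : ℕ) : ℝ) ^ j
      / (((m + j)! : ℕ) : ℝ) * r ^ j * Real.exp (((m + j : ℕ) : ℝ) * r)) := by
  obtain ⟨m', rfl⟩ : ∃ m', m = m' + 1 := ⟨m - 1, by omega⟩
  obtain ⟨a, ha0, ha⟩ := my_stirling
  have hr1 : r ≤ 1 := by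
    have h1 : r ≤ r * Real.exp r := by
      nlinarith [Real.one_le_exp hr0]
    have h2 : (Real.exp 1)⁻¹ ≤ 1 := by
      rw [inv_le_one_iff₀]; right; exact Real.one_le_exp one_pos.le
    linarith
  set E : ℝ := Real.exp (m' + 1) * Real.exp (m' + 1) / ((m' ! : ℝ) * a) with hE
  have hE0 : 0 < E := by rw [hE]; positivity
  have hbound : ∀ i : ℕ, 1 ≤ i →
      (((m' + 1 + i - 1).choose (m' + 1 - 1) : ℕ) : ℝ) * ((m' + 1 + i : ℕ) : ℝ) ^ i
        / (((m' + 1 + i)! : ℕ) : ℝ) * r ^ i * Real.exp (((m' + 1 + i : ℕ) : ℝ) * r)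
      ≤ E / (Real.sqrt (2 * i) * i) := by
    intro i hi
    have hipos : (0:ℝ) < (i : ℝ) := by exact_mod_cast hi
    have e2 : ((m' + 1 + i)! : ℕ) = (m' + i).choose m' * m' ! * i ! * (m' + 1 + i) := by
      have h := Nat.choose_mul_factorial_mul_factorial (Nat.le_add_right m' i)
      rw [show m' + i - m' = i by omega] at h
      rw [show m' + 1 + i = (m' + i) + 1 by omega, Nat.factorial_succ, h]
      ring
    have e1 : (m' + 1 + i - 1).choose (m' + 1 - 1) = (m' + i).choose m' := by
      congr 1 <;> omega
    set γ : ℝ := ((Real.exp 1)⁻¹) ^ i with hγ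
    have hγpos : 0 < γ := by positivity
    have hchoosepos : (0:ℝ) < (((m' + i).choose m' : ℕ) : ℝ) := by
      exact_mod_cast Nat.choose_pos (Nat.le_add_right m' i)
    have hWeq : (((m' + 1 + i - 1).choose (m' + 1 - 1) : ℕ) : ℝ)
        * ((m' + 1 + i : ℕ) : ℝ) ^ i / (((m' + 1 + i)! : ℕ) : ℝ) * r ^ i
        * Real.exp (((m' + 1 + i : ℕ) : ℝ) * r)
        = (((m' + i).choose m' : ℕ) : ℝ) * (((m' + 1 + i : ℕ) : ℝ) ^ i
          * (r ^ i * Real.exp (((m' + 1 + i : ℕ) : ℝ) * r)))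
        / ((((m' + i).choose m' : ℕ) : ℝ)
          * ((m' ! : ℝ) * ((i ! : ℝ) * ((m' + 1 + i : ℕ) : ℝ)))) := by
      rw [e1, e2]
      push_cast
      ring
    rw [hWeq, mul_div_mul_left _ _ (ne_of_gt hchoosepos)]
    have hnum1 : ((m' + 1 + i : ℕ) : ℝ) ^ i ≤ (i : ℝ) ^ i * Real.exp (m' + 1) := by
      have h1 : ((m' : ℝ) + 1) / (i : ℝ) + 1 ≤ Real.exp (((m' : ℝ) + 1) / (i : ℝ)) :=
        Real.add_one_le_exp _
      have h3 := mul_le_mul_of_nonneg_left h1 (le_of_lt hipos)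
      have h2 : (i : ℝ) * (((m' : ℝ) + 1) / (i : ℝ) + 1) = ((m' : ℝ) + 1) + i := by
        field_simp
      have step : ((m' + 1 + i : ℕ) : ℝ) ≤ (i : ℝ) * Real.exp (((m' : ℝ) + 1) / (i : ℝ)) := by
        push_cast
        linarith [h3, h2.le, h2.ge]
      calc ((m' + 1 + i : ℕ) : ℝ) ^ i
          ≤ ((i : ℝ) * Real.exp (((m' : ℝ) + 1) / (i : ℝ))) ^ i :=
            pow_le_pow_left₀ (by positivity) step i
        _ = (i : ℝ) ^ i * Real.exp ((m' : ℝ) + 1) := by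
            rw [mul_pow, ← Real.exp_nat_mul, mul_div_cancel₀ _ (ne_of_gt hipos)]
    have hnum2 : r ^ i * Real.exp (((m' + 1 + i : ℕ) : ℝ) * r)
        ≤ γ * Real.exp ((m' : ℝ) + 1) := by
      have expand : Real.exp (((m' + 1 + i : ℕ) : ℝ) * r)
          = Real.exp r ^ i * Real.exp (((m' : ℝ) + 1) * r) := by
        rw [← Real.exp_nat_mul, ← Real.exp_add]
        congr 1
        push_cast
        ring
      rw [expand, show r ^ i * (Real.exp r ^ i * Real.exp (((m' : ℝ) + 1) * r))
          = (r * Real.exp r) ^ i * Real.exp (((m' : ℝ) + 1) * r) by rw [mul_pow]; ring]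
      apply mul_le_mul
      · exact pow_le_pow_left₀ (by positivity) ht i
      · apply Real.exp_le_exp.mpr
        nlinarith
      · positivity
      · positivity
    have hfi1 : (1:ℝ) ≤ (i ! : ℝ) := Nat.one_le_cast.mpr i.factorial_pos
    have hmf1 : (1:ℝ) ≤ (m' ! : ℝ) := Nat.one_le_cast.mpr m'.factorial_pos
    have hile : (i : ℝ) ≤ ((m' + 1 + i : ℕ) : ℝ) := by push_cast; linarith
    have hden : (m' ! : ℝ) * (a * (Real.sqrt (2 * i) * ((i : ℝ) ^ i * γ)) * (i : ℝ))
        ≤ (m' ! : ℝ) * ((i ! : ℝ) * ((m' + 1 + i : ℕ) : ℝ)) := by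
      have hst := ha i hi
      have hfac : ((i : ℝ) / Real.exp 1) ^ i = (i : ℝ) ^ i * γ := by
        rw [hγ, div_pow, inv_pow, div_eq_mul_inv]
      rw [hfac] at hst
      apply mul_le_mul_of_nonneg_left _ (by linarith)
      calc a * (Real.sqrt (2 * i) * ((i : ℝ) ^ i * γ)) * (i : ℝ)
          ≤ (i ! : ℝ) * (i : ℝ) := mul_le_mul_of_nonneg_right hst (le_of_lt hipos)
        _ ≤ (i ! : ℝ) * ((m' + 1 + i : ℕ) : ℝ) :=
            mul_le_mul_of_nonneg_left hile (by linarith)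
    have hdenpos : (0:ℝ) < (m' ! : ℝ) * (a * (Real.sqrt (2 * i) * ((i : ℝ) ^ i * γ)) * (i : ℝ)) := by
      have : (0:ℝ) < (m' ! : ℝ) := by linarith
      positivity
    calc ((m' + 1 + i : ℕ) : ℝ) ^ i * (r ^ i * Real.exp (((m' + 1 + i : ℕ) : ℝ) * r))
          / ((m' ! : ℝ) * ((i ! : ℝ) * ((m' + 1 + i : ℕ) : ℝ)))
        ≤ ((i : ℝ) ^ i * Real.exp ((m' : ℝ) + 1) * (γ * Real.exp ((m' : ℝ) + 1)))
          / ((m' ! : ℝ) * (a * (Real.sqrt (2 * i) * ((i : ℝ) ^ i * γ)) * (i : ℝ))) := by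
          apply div_le_div₀ (by positivity) _ hdenpos hden
          exact mul_le_mul hnum1 hnum2 (by positivity) (by positivity)
      _ = E / (Real.sqrt (2 * i) * i) := by
          rw [hE, div_eq_div_iff hdenpos.ne' (by positivity : (0:ℝ) < Real.sqrt (2 * i) * i).ne']
          field_simp
  rw [← summable_nat_add_iff 1]
  have base : Summable (fun n : ℕ => ((n : ℝ) ^ ((3:ℝ)/2))⁻¹) := by
    have := Real.summable_one_div_nat_rpow.mpr (show (1:ℝ) < 3/2 by norm_num)
    simpa [one_div] using this
  have shifted : Summable (fun n : ℕ => (((n + 1 : ℕ) : ℝ) ^ ((3:ℝ)/2))⁻¹) :=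
    (summable_nat_add_iff 1).mpr base
  refine Summable.of_nonneg_of_le (fun n => by positivity) (fun n => ?_)
    (shifted.mul_left E)
  have hp : (0:ℝ) < ((n + 1 : ℕ) : ℝ) := by positivity
  have hP : (((n + 1 : ℕ) : ℝ)) ^ ((3:ℝ)/2)
      = Real.sqrt ((n + 1 : ℕ) : ℝ) * ((n + 1 : ℕ) : ℝ) := by
    rw [show (3:ℝ)/2 = 1/2 + 1 by norm_num, Real.rpow_add hp, Real.rpow_one,
      ← Real.sqrt_eq_rpow]
  have hPD : (((n + 1 : ℕ) : ℝ)) ^ ((3:ℝ)/2)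
      ≤ Real.sqrt (2 * ((n + 1 : ℕ) : ℝ)) * ((n + 1 : ℕ) : ℝ) := by
    rw [hP]
    apply mul_le_mul_of_nonneg_right _ (le_of_lt hp)
    apply Real.sqrt_le_sqrt
    linarith
  calc (((m' + 1 + (n+1) - 1).choose (m' + 1 - 1) : ℕ) : ℝ)
      * ((m' + 1 + (n+1) : ℕ) : ℝ) ^ (n+1) / (((m' + 1 + (n+1))! : ℕ) : ℝ) * r ^ (n+1)
      * Real.exp (((m' + 1 + (n+1) : ℕ) : ℝ) * r)
      ≤ E / (Real.sqrt (2 * ((n+1 : ℕ) : ℝ)) * ((n+1 : ℕ) : ℝ)) := by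
        exact hbound (n+1) (by omega)
    _ ≤ E * ((((n + 1 : ℕ) : ℝ) ^ ((3:ℝ)/2))⁻¹) := by
        rw [← div_eq_mul_inv]
        apply div_le_div_of_nonneg_left _ (by positivity) hPD
        exact hE0.le

set_option maxHeartbeats 2000000 in
theorem stmt7 (f : ℂ → ℂ) (hf : Differentiable ℂ f) (C K : ℝ) (hC : 0 < C) (hK : 0 < K)
    (hgrowth : ∀ n : ℕ, ‖iteratedDeriv n f 0‖ ≤ C * K ^ n) :
    ∀ x : ℂ, Real.exp 1 * K * ‖x‖ * Real.exp (K * ‖x‖) ≤ 1 →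
      ∀ m : ℕ, 1 ≤ m →
        HasSum (fun j : ℕ =>
          ((m + j - 1).choose (m - 1) : ℂ) *
            ((-1 : ℂ) ^ j * ((m + j : ℕ) : ℂ) ^ j / (((m + j)! : ℕ) : ℂ)) *
            x ^ j * iteratedDeriv (m + j) f (((m + j : ℕ) : ℂ) * x))
          ((1 / ((m ! : ℕ) : ℂ)) * iteratedDeriv m f 0) := by
  intro x hx m hm
  set r : ℝ := K * ‖x‖ with hr
  have hr0 : 0 ≤ r := by positivity
  have he : (0:ℝ) < Real.exp 1 := Real.exp_pos 1
  have ht : r * Real.exp r ≤ (Real.exp 1)⁻¹ := by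
    have h1 : Real.exp 1 * (r * Real.exp r) ≤ 1 := by
      calc Real.exp 1 * (r * Real.exp r)
          = Real.exp 1 * K * ‖x‖ * Real.exp (K * ‖x‖) := by rw [hr]; ring
        _ ≤ 1 := hx
    rw [inv_eq_one_div, le_div_iff₀ he]
    linarith [h1]
  -- the double-indexed family
  set u : ℕ × ℕ → ℂ := fun p =>
    ((m + p.1 - 1).choose (m - 1) : ℂ) *
      ((-1 : ℂ) ^ p.1 * ((m + p.1 : ℕ) : ℂ) ^ p.1 / (((m + p.1)! : ℕ) : ℂ)) *
      x ^ p.1 *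
      (((p.2 ! : ℕ) : ℂ)⁻¹ * (((m + p.1 : ℕ) : ℂ) * x) ^ p.2
        * iteratedDeriv (m + p.1 + p.2) f 0) with hu
  set A : ℕ → ℝ := fun j =>
    (((m + j - 1).choose (m - 1) : ℕ) : ℝ) * ((m + j : ℕ) : ℝ) ^ j
      / (((m + j)! : ℕ) : ℝ) * r ^ j * (C * K ^ m) with hA
  set b : ℕ × ℕ → ℝ := fun p =>
    A p.1 * ((((m + p.1 : ℕ) : ℝ) * r) ^ p.2 / ((p.2 ! : ℕ) : ℝ)) with hb
  have hb0 : ∀ p, 0 ≤ b p := by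
    intro p
    simp only [hb, hA]
    positivity
  have hub : ∀ p, ‖u p‖ ≤ b p := by
    rintro ⟨j, q⟩
    have hnorm : ‖u (j, q)‖
        = (((m + j - 1).choose (m - 1) : ℕ) : ℝ) * ((m + j : ℕ) : ℝ) ^ j
          / (((m + j)! : ℕ) : ℝ) * ‖x‖ ^ j
          * ((((m + j : ℕ) : ℝ) * ‖x‖) ^ q / ((q ! : ℕ) : ℝ))
          * ‖iteratedDeriv (m + j + q) f 0‖ := by
      simp only [hu, norm_mul, norm_div, norm_pow, norm_inv, Complex.norm_natCast,
        norm_neg, norm_one]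
      ring
    rw [hnorm]
    calc (((m + j - 1).choose (m - 1) : ℕ) : ℝ) * ((m + j : ℕ) : ℝ) ^ j
          / (((m + j)! : ℕ) : ℝ) * ‖x‖ ^ j
          * ((((m + j : ℕ) : ℝ) * ‖x‖) ^ q / ((q ! : ℕ) : ℝ))
          * ‖iteratedDeriv (m + j + q) f 0‖
        ≤ (((m + j - 1).choose (m - 1) : ℕ) : ℝ) * ((m + j : ℕ) : ℝ) ^ j
          / (((m + j)! : ℕ) : ℝ) * ‖x‖ ^ j
          * ((((m + j : ℕ) : ℝ) * ‖x‖) ^ q / ((q ! : ℕ) : ℝ))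
          * (C * K ^ (m + j + q)) := by
          apply mul_le_mul_of_nonneg_left (hgrowth (m + j + q))
          positivity
      _ = b (j, q) := by
          simp only [hb, hA, hr]
          rw [pow_add K (m + j) q, pow_add K m j]
          ring
  have hbsum : Summable b := by
    apply (summable_prod_of_nonneg (fun p => hb0 p)).mpr
    constructor
    · intro j
      have hrowsum : Summable (fun q : ℕ =>
          A j * ((((m + j : ℕ) : ℝ) * r) ^ q / ((q ! : ℕ) : ℝ))) :=
        (Real.summable_pow_div_factorial _).mul_left _
      simpa only [hb] using hrowsum
    · have hrow : ∀ j : ℕ, ∑' q, b (j, q) = A j * Real.exp (((m + j : ℕ) : ℝ) * r) := by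
        intro j
        have hs : HasSum (fun q : ℕ => ((((m + j : ℕ) : ℝ) * r) ^ q / ((q ! : ℕ) : ℝ)))
            (Real.exp (((m + j : ℕ) : ℝ) * r)) := by
          have h := NormedSpace.expSeries_div_hasSum_exp (((m + j : ℕ) : ℝ) * r)
          rw [Real.exp_eq_exp_ℝ]
          exact h
        simp only [hb]
        rw [tsum_mul_left, hs.tsum_eq]
      have target := (my_summable m hm r hr0 ht).mul_right (C * K ^ m)
      apply Summable.congr (f := fun j =>
        (((m + j - 1).choose (m - 1) : ℕ) : ℝ) * ((m + j : ℕ) : ℝ) ^ j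
          / (((m + j)! : ℕ) : ℝ) * r ^ j * Real.exp (((m + j : ℕ) : ℝ) * r) * (C * K ^ m))
        target
      intro j
      rw [hrow j, hA]
      ring
  have husum : Summable u :=
    Summable.of_norm (Summable.of_nonneg_of_le (fun p => norm_nonneg _) hub hbsum)
  have hU : HasSum u (∑' p, u p) := husum.hasSum
  have hfib : ∀ j : ℕ, HasSum (fun q => u (j, q))
      (((m + j - 1).choose (m - 1) : ℂ) *
        ((-1 : ℂ) ^ j * ((m + j : ℕ) : ℂ) ^ j / (((m + j)! : ℕ) : ℂ)) *
        x ^ j * iteratedDeriv (m + j) f (((m + j : ℕ) : ℂ) * x)) := by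
    intro j
    exact (my_taylor hf (m + j) (((m + j : ℕ) : ℂ) * x)).mul_left
      (((m + j - 1).choose (m - 1) : ℂ) *
        ((-1 : ℂ) ^ j * ((m + j : ℕ) : ℂ) ^ j / (((m + j)! : ℕ) : ℂ)) * x ^ j)
  have hMain : HasSum (fun j : ℕ =>
      ((m + j - 1).choose (m - 1) : ℂ) *
        ((-1 : ℂ) ^ j * ((m + j : ℕ) : ℂ) ^ j / (((m + j)! : ℕ) : ℂ)) *
        x ^ j * iteratedDeriv (m + j) f (((m + j : ℕ) : ℂ) * x)) (∑' p, u p) :=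
    hU.prod_fiberwise hfib
  suffices hSval : (∑' p, u p) = (1 / ((m ! : ℕ) : ℂ)) * iteratedDeriv m f 0 by
    rwa [hSval] at hMain
  -- regroup along diagonals
  have h1 : HasSum (u ∘ (Finset.HasAntidiagonal.sigmaAntidiagonalEquivProd)) (∑' p, u p) :=
    (Equiv.hasSum_iff _).mpr hU
  have h2 : HasSum (fun n : ℕ => ∑ p ∈ Finset.HasAntidiagonal.antidiagonal n, u p) (∑' p, u p) := by
    apply h1.sigma
    intro n
    have hsc : (∑ p ∈ Finset.HasAntidiagonal.antidiagonal n, u p)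
        = ∑ c : {p : ℕ × ℕ // p ∈ Finset.HasAntidiagonal.antidiagonal n}, u c :=
      (Finset.sum_coe_sort _ u).symm
    rw [hsc]
    exact hasSum_fintype _
  have h3 : HasSum (fun n : ℕ => ∑ p ∈ Finset.HasAntidiagonal.antidiagonal n, u p)
      ((1 / ((m ! : ℕ) : ℂ)) * iteratedDeriv m f 0) := by
    have hfun : (fun n : ℕ => ∑ p ∈ Finset.HasAntidiagonal.antidiagonal n, u p)
        = fun n : ℕ => if n = 0 then (1 / ((m ! : ℕ) : ℂ)) * iteratedDeriv m f 0 else 0 := by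
      funext n
      rcases n with _ | n
      · simp only [Finset.Nat.antidiagonal_zero, Finset.sum_singleton, if_pos rfl]
        simp only [hu]
        have h0 : (m + 0 - 1).choose (m - 1) = 1 := by
          rw [show m + 0 - 1 = m - 1 by omega, Nat.choose_self]
        simp [h0]
      · rw [if_neg (Nat.succ_ne_zero n)]
        rw [Finset.Nat.sum_antidiagonal_eq_sum_range_succ_mk]
        have hterm : ∀ j ∈ Finset.range (n + 1 + 1),
            u (j, n + 1 - j)
            = (iteratedDeriv (m + (n + 1)) f 0 * x ^ (n + 1)) *
              ((-1 : ℂ) ^ j * (((m + j - 1).choose (m - 1) : ℕ) : ℂ)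
                * ((m + j : ℕ) : ℂ) ^ (n + 1)
                / ((((m + j)! : ℕ) : ℂ) * (((n + 1 - j)! : ℕ) : ℂ))) := by
          intro j hj
          have hj' : j ≤ n + 1 := Nat.lt_succ_iff.mp (Finset.mem_range.mp hj)
          have hidx : m + j + (n + 1 - j) = m + (n + 1) := by omega
          have hxp : x ^ j * x ^ (n + 1 - j) = x ^ (n + 1) := by
            rw [← pow_add]; congr 1; omega
          have hmp : ((m + j : ℕ) : ℂ) ^ j * ((m + j : ℕ) : ℂ) ^ (n + 1 - j)
              = ((m + j : ℕ) : ℂ) ^ (n + 1) := by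
            rw [← pow_add]; congr 1; omega
          simp only [hu, hidx]
          rw [mul_pow]
          rw [← hxp, ← hmp]
          ring
        rw [Finset.sum_congr rfl hterm, ← Finset.mul_sum]
        rw [my_combo m (n + 1) hm (by omega), mul_zero]
    rw [hfun]
    exact hasSum_ite_eq 0 _
  exact h2.unique h3
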